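/- For every p ∈ (0,1) and every ω ∈ ℂ with |ω|² < (ln(p/(1−p)))² + π², the series ∑_{n=1}^∞ Q_n(p) ω^n / n! converges absolutely and exp(∑_{n=1}^∞ Q_n(p) ω^n / n!) = p + (1−p) e^ω. -/

import Mathlib

noncomputable def Q : ℕ → Polynomial ℝ
  | 0 => 0
  | 1 => 1 - Polynomial.X
  | n + 2 => Polynomial.X * (Polynomial.X - 1) * (Q (n + 1)).derivative

open Polynomial Complex

noncomputable def Rpoly : ℕ → Polynomial ℝ
  | 0 => X
  | n + 1 => (X - X ^ 2) * (Rpoly n).derivative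

lemma Q_succ_eq (n : ℕ) : Q (n + 1) = (Rpoly n).comp (1 - X) := by
  induction n with
  | zero => simp [Q, Rpoly]
  | succ n ih =>
    show Polynomial.X * (Polynomial.X - 1) * (Q (n + 1)).derivative = _
    rw [ih, derivative_comp_one_sub_X]
    show _ = ((X - X ^ 2) * (Rpoly n).derivative).comp (1 - X)
    rw [mul_comp, sub_comp, X_comp, pow_comp, X_comp]
    ring

section
variable (p : ℝ)

noncomputable def hf : ℂ → ℂ := fun z => (p : ℂ) + (1 - p) * Complex.exp z
noncomputable def uf : ℂ → ℂ := fun z => (1 - (p:ℂ)) * Complex.exp z / hf p z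

lemma hf_hasDerivAt (z : ℂ) : HasDerivAt (hf p) ((1 - (p:ℂ)) * Complex.exp z) z := by
  exact ((Complex.hasDerivAt_exp z).const_mul ((1:ℂ) - p)).const_add (p : ℂ)

lemma uf_hasDerivAt {z : ℂ} (hz : hf p z ≠ 0) :
    HasDerivAt (uf p) (uf p z - (uf p z) ^ 2) z := by
  have h2 : HasDerivAt (fun z => (1 - (p:ℂ)) * Complex.exp z) ((1 - (p:ℂ)) * Complex.exp z) z :=
    (Complex.hasDerivAt_exp z).const_mul _
  have := h2.div (hf_hasDerivAt p z) hz
  convert this using 1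
  · rfl
  · rfl
  · rfl
  rw [uf]
  field_simp

lemma hf_open : IsOpen {z : ℂ | hf p z ≠ 0} := by
  have hc : Continuous (hf p) := by
    unfold hf; continuity
  exact IsOpen.preimage hc isOpen_ne

end

lemma uf_iteratedDeriv (p : ℝ) : ∀ n : ℕ, ∀ z : ℂ, hf p z ≠ 0 →
    iteratedDeriv n (uf p) z = Polynomial.aeval (uf p z) (Rpoly n) := by
  intro n
  induction n with
  | zero => intro z hz; simp [Rpoly]
  | succ n ih =>
    intro z hz
    have hev : iteratedDeriv n (uf p) =ᶠ[nhds z] (fun w => Polynomial.aeval (uf p w) (Rpoly n)) := by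
      filter_upwards [(hf_open p).mem_nhds hz] with w hw using ih w hw
    rw [iteratedDeriv_succ, hev.deriv_eq]
    have hu := uf_hasDerivAt p hz
    have hcomp := ((Rpoly n).hasDerivAt_aeval (uf p z)).comp z hu
    rw [show ((fun x => Polynomial.aeval x (Rpoly n)) ∘ uf p) = (fun w => Polynomial.aeval (uf p w) (Rpoly n)) from rfl] at hcomp
    rw [hcomp.deriv]
    rw [show Rpoly (n+1) = (X - X ^ 2) * (Rpoly n).derivative from rfl]
    simp only [map_mul, map_sub, map_pow, Polynomial.aeval_X]
    ring

lemma hne_aux {p : ℝ} (hp0 : 0 < p) (hp1 : p < 1) {z : ℂ}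
    (hz : ‖z‖ ^ 2 < Real.log (p / (1 - p)) ^ 2 + Real.pi ^ 2) :
    hf p z ≠ 0 := by
  intro h0
  rw [hf] at h0
  have hq : (0:ℝ) < 1 - p := by linarith
  set w : ℝ := p / (1 - p) with hw
  have hwpos : 0 < w := div_pos hp0 hq
  have h1 : (1 - (p:ℂ)) ≠ 0 := by
    have : ((1 - p : ℝ) : ℂ) ≠ 0 := Complex.ofReal_ne_zero.2 (ne_of_gt hq)
    push_cast at this; exact this
  have hexp : Complex.exp z = ((-w : ℝ) : ℂ) := by
    rw [hw]; push_cast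
    rw [← neg_div, eq_div_iff h1]
    linear_combination h0
  have habs : Real.exp z.re = w := by
    have := congrArg (‖·‖) hexp
    rw [Complex.norm_exp, Complex.norm_real, Real.norm_eq_abs, abs_of_neg (by linarith)] at this
    simpa using this
  have hre : z.re = Real.log w := by
    rw [← habs, Real.log_exp]
  have hcos : Real.cos z.im = -1 := by
    have h2 := congrArg Complex.re hexp
    rw [Complex.exp_re, Complex.ofReal_re, habs] at h2
    have h3 : w * (Real.cos z.im + 1) = 0 := by linear_combination h2
    rcases mul_eq_zero.1 h3 with h | h
    · exact absurd h (ne_of_gt hwpos)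
    · linarith
  have him : Real.pi ≤ |z.im| := by
    have h1 : Real.cos (z.im + Real.pi) = 1 := by
      rw [Real.cos_add_pi, hcos]; ring
    obtain ⟨n, hn⟩ := (Real.cos_eq_one_iff _).1 h1
    have hzim : z.im = (2 * (n:ℝ) - 1) * Real.pi := by
      linarith [hn]
    rw [hzim, abs_mul, abs_of_pos Real.pi_pos]
    have hge : (1:ℝ) ≤ |(2 * (n:ℝ) - 1)| := by
      have : (1:ℝ) ≤ |((2 * n - 1 : ℤ) : ℝ)| := by
        rw [← Int.cast_abs]
        exact_mod_cast Int.one_le_abs (by omega)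
      push_cast at this
      convert this using 2
    nlinarith [Real.pi_pos]
  have hsq : ‖z‖ ^ 2 = z.re ^ 2 + z.im ^ 2 := by
    rw [Complex.sq_norm, Complex.normSq_apply]; ring
  have h2 : Real.pi ^ 2 ≤ z.im ^ 2 := by
    nlinarith [abs_nonneg z.im, _root_.sq_abs z.im, Real.pi_pos]
  rw [hsq, hre] at hz
  nlinarith [hz]

set_option maxHeartbeats 1000000 in
/-- For `p ∈ (0,1)` and `ω ∈ ℂ` with `|ω|² < (ln(p/(1-p)))² + π²`, the
series `∑_{n=1}^∞ Q_n(p) ω^n / n!` converges absolutely (index `n : ℕ` stands for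
`n+1 ≥ 1`) and `exp(∑_{n=1}^∞ Q_n(p) ω^n / n!) = p + (1-p) e^ω`. -/
theorem stmt18 (p : ℝ) (hp : p ∈ Set.Ioo (0 : ℝ) 1) (ω : ℂ)
    (hω : ‖ω‖ ^ 2 < Real.log (p / (1 - p)) ^ 2 + Real.pi ^ 2) :
    Summable (fun n : ℕ =>
        ‖(((Q (n + 1)).eval p : ℝ) : ℂ) * ω ^ (n + 1) / (Nat.factorial (n + 1) : ℂ)‖) ∧
      Complex.exp
          (∑' n : ℕ, (((Q (n + 1)).eval p : ℝ) : ℂ) * ω ^ (n + 1) / (Nat.factorial (n + 1) : ℂ)) =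
        (p : ℂ) + (1 - p) * Complex.exp ω := by
  obtain ⟨hp0, hp1⟩ := hp
  set L : ℝ := Real.log (p / (1 - p)) with hL
  set R : ℝ := Real.sqrt (L ^ 2 + Real.pi ^ 2) with hRdef
  have hRpos : 0 < R := Real.sqrt_pos.2 (by positivity)
  have hR2 : R ^ 2 = L ^ 2 + Real.pi ^ 2 := Real.sq_sqrt (by positivity)
  have hωR : ‖ω‖ < R := (Real.lt_sqrt (norm_nonneg _)).2 hω
  have hne : ∀ z : ℂ, ‖z‖ < R → hf p z ≠ 0 := by
    intro z hz
    apply hne_aux hp0 hp1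
    rw [← hL, ← hR2]
    nlinarith [norm_nonneg z]
  set r : ℝ := (2 * ‖ω‖ + R) / 3 with hrdef
  set r' : ℝ := (‖ω‖ + 2 * R) / 3 with hr'def
  have hωr : ‖ω‖ < r := by rw [hrdef]; linarith
  have hrr' : r < r' := by rw [hrdef, hr'def]; linarith
  have hr'R : r' < R := by rw [hr'def]; linarith
  have hrpos : 0 < r := lt_of_le_of_lt (norm_nonneg ω) hωr
  have hr'pos : 0 < r' := hrpos.trans hrr'
  set ρ : NNReal := r'.toNNReal with hρdef
  have hρcoe : (ρ : ℝ) = r' := Real.coe_toNNReal _ hr'pos.le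
  have hρpos : 0 < ρ := Real.toNNReal_pos.2 hr'pos
  have hud : DifferentiableOn ℂ (uf p) (Metric.closedBall 0 (ρ:ℝ)) := by
    intro z hz
    rw [Metric.mem_closedBall, dist_zero_right, hρcoe] at hz
    exact ((uf_hasDerivAt p (hne z (lt_of_le_of_lt hz hr'R))).differentiableAt).differentiableWithinAt
  have hpu : HasFPowerSeriesOnBall (uf p) (cauchyPowerSeries (uf p) 0 ρ) 0 ρ :=
    hud.hasFPowerSeriesOnBall hρpos
  set pu := cauchyPowerSeries (uf p) 0 ρ with hpudef
  have h00 : hf p 0 ≠ 0 := hne 0 (by simpa using hRpos)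
  have hu0 : uf p 0 = ((1 - p : ℝ) : ℂ) := by
    rw [uf, hf, Complex.exp_zero]
    rw [show (p:ℂ) + (1 - p) * 1 = 1 by ring]
    push_cast
    rw [mul_one, div_one]
  have hC : ∀ n : ℕ, (((Q (n+1)).eval p : ℝ) : ℂ) = (n.factorial : ℂ) * pu.coeff n := by
    intro n
    have h1 := hpu.factorial_smul (1 : ℂ) n
    rw [← iteratedDeriv_eq_iteratedFDeriv] at h1
    have h2 : pu n (fun _ => 1) = pu.coeff n := by
      rw [FormalMultilinearSeries.apply_eq_pow_smul_coeff]; simp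
    rw [h2, uf_iteratedDeriv p n 0 h00, hu0] at h1
    have h3 : Polynomial.aeval (((1 - p : ℝ) : ℂ)) (Rpoly n) = (((Rpoly n).eval (1 - p) : ℝ) : ℂ) := by
      have := Polynomial.aeval_algebraMap_apply_eq_algebraMap_eval (A := ℂ) (1 - p : ℝ) (Rpoly n)
      simpa using this
    rw [h3] at h1
    have h4 : (Q (n+1)).eval p = (Rpoly n).eval (1 - p) := by
      rw [Q_succ_eq, Polynomial.eval_comp]; simp
    rw [h4, ← h1, nsmul_eq_mul]
  have hnormC : ∀ n : ℕ, ‖(((Q (n+1)).eval p : ℝ) : ℂ)‖ = (n.factorial : ℝ) * ‖pu n‖ := by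
    intro n
    rw [hC n, norm_mul, Complex.norm_natCast, pu.norm_apply_eq_norm_coef]
  have hsum1 : Summable (fun n : ℕ => ‖pu n‖ * ‖ω‖ ^ n) := by
    have h5 : ((‖ω‖₊ : NNReal) : ENNReal) < pu.radius := by
      refine lt_of_lt_of_le ?_ hpu.r_le
      rw [ENNReal.coe_lt_coe, ← NNReal.coe_lt_coe, coe_nnnorm, hρcoe]
      exact hωr.trans hrr'
    simpa using pu.summable_norm_mul_pow h5
  have hterm : ∀ n : ℕ,
      ‖(((Q (n + 1)).eval p : ℝ) : ℂ) * ω ^ (n + 1) / (Nat.factorial (n + 1) : ℂ)‖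
        ≤ ‖pu n‖ * ‖ω‖ ^ n * ‖ω‖ := by
    intro n
    rw [norm_div, norm_mul, norm_pow, hnormC n, Complex.norm_natCast]
    rw [div_le_iff₀ (by positivity)]
    push_cast [Nat.factorial_succ, pow_succ]
    calc (n.factorial : ℝ) * ‖pu n‖ * (‖ω‖ ^ n * ‖ω‖)
        = ‖pu n‖ * ‖ω‖ ^ n * ‖ω‖ * (1 * (n.factorial : ℝ)) := by ring
      _ ≤ ‖pu n‖ * ‖ω‖ ^ n * ‖ω‖ * (((n:ℝ) + 1) * (n.factorial : ℝ)) := by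
          have hX : (0:ℝ) ≤ ‖pu n‖ * ‖ω‖ ^ n * ‖ω‖ * (n.factorial : ℝ) := by positivity
          nlinarith [mul_nonneg hX (Nat.cast_nonneg (α := ℝ) n)]
  have hsummable : Summable (fun n : ℕ =>
      ‖(((Q (n + 1)).eval p : ℝ) : ℂ) * ω ^ (n + 1) / (Nat.factorial (n + 1) : ℂ)‖) :=
    Summable.of_nonneg_of_le (fun n => norm_nonneg _) hterm (hsum1.mul_right ‖ω‖)
  refine ⟨hsummable, ?_⟩
  by_cases hω0 : ω = 0
  · subst hω0
    have hz : (fun n : ℕ => (((Q (n + 1)).eval p : ℝ) : ℂ) * (0:ℂ) ^ (n + 1) / (Nat.factorial (n + 1) : ℂ))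
        = fun _ => 0 := by
      funext n; simp [zero_pow (Nat.succ_ne_zero n)]
    rw [hz, tsum_zero, Complex.exp_zero]
    ring
  have hnω : 0 < ‖ω‖ := norm_pos_iff.2 hω0
  set a : ℝ := r / ‖ω‖ with hadef
  have ha1 : 1 < a := (one_lt_div hnω).2 hωr
  have h0s : (0:ℝ) ∈ Set.Ioo (-a) a := ⟨by linarith, by linarith⟩
  have h1s : (1:ℝ) ∈ Set.Ioo (-a) a := ⟨by linarith, by linarith⟩
  have hzbound : ∀ t ∈ Set.Ioo (-a) a, ‖(t:ℂ) * ω‖ < r := by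
    intro t ht
    rw [norm_mul, Complex.norm_real, Real.norm_eq_abs]
    have hta : |t| < a := abs_lt.2 ⟨ht.1, ht.2⟩
    calc |t| * ‖ω‖ < a * ‖ω‖ := mul_lt_mul_of_pos_right hta hnω
      _ = r := by rw [hadef]; exact div_mul_cancel₀ r (ne_of_gt hnω)
  set g : ℕ → ℝ → ℂ := fun n t => (((Q (n + 1)).eval p : ℝ) : ℂ) * ((t:ℂ) * ω) ^ (n + 1) / (Nat.factorial (n + 1) : ℂ) with hgdef
  set g' : ℕ → ℝ → ℂ := fun n t => (((Q (n + 1)).eval p : ℝ) : ℂ) * (((n:ℂ) + 1) * ((t:ℂ) * ω) ^ n * ω) / (Nat.factorial (n + 1) : ℂ) with hg'def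
  have hlin : ∀ t : ℝ, HasDerivAt (fun t : ℝ => ((t:ℂ) * ω)) ω t := by
    intro t
    simpa using (Complex.ofRealCLM.hasDerivAt (x := t)).mul_const ω
  have hgderiv : ∀ (n : ℕ) (t : ℝ), HasDerivAt (g n) (g' n t) t := by
    intro n t
    have hpow : HasDerivAt (fun t : ℝ => ((t:ℂ) * ω) ^ (n+1)) (((n:ℂ) + 1) * ((t:ℂ) * ω) ^ n * ω) t := by
      have h2 := (hasDerivAt_pow (n+1) ((t:ℂ) * ω)).comp t (hlin t)
      convert h2 using 1
      · rfl
      · rfl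
      push_cast [Nat.add_sub_cancel]
      ring
    exact (hpow.const_mul ((((Q (n + 1)).eval p : ℝ) : ℂ))).div_const (Nat.factorial (n + 1) : ℂ)
  have hsum2 : Summable (fun n : ℕ => ‖pu n‖ * r ^ n * ‖ω‖) := by
    have h5 : ((r.toNNReal : NNReal) : ENNReal) < pu.radius := by
      refine lt_of_lt_of_le ?_ hpu.r_le
      rw [ENNReal.coe_lt_coe, ← NNReal.coe_lt_coe, Real.coe_toNNReal _ hrpos.le, hρcoe]
      exact hrr'
    have h6 := pu.summable_norm_mul_pow h5
    have h7 : (fun n : ℕ => ‖pu n‖ * ((r.toNNReal : ℝ)) ^ n) = fun n => ‖pu n‖ * r ^ n := by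
      funext n; rw [Real.coe_toNNReal _ hrpos.le]
    rw [h7] at h6
    exact h6.mul_right ‖ω‖
  have hg'bound : ∀ (n : ℕ), ∀ t ∈ Set.Ioo (-a) a, ‖g' n t‖ ≤ ‖pu n‖ * r ^ n * ‖ω‖ := by
    intro n t ht
    have heq : ‖g' n t‖ = ‖pu n‖ * (|t| * ‖ω‖) ^ n * ‖ω‖ := by
      have habs : |(Q (n+1)).eval p| = (n.factorial : ℝ) * ‖pu n‖ := by
        rw [← Real.norm_eq_abs, ← Complex.norm_real]
        exact hnormC n
      have hn1 : ‖(n:ℂ) + 1‖ = (n:ℝ) + 1 := by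
        rw [show ((n:ℂ) + 1) = ((n+1 : ℕ) : ℂ) by push_cast; ring, Complex.norm_natCast]
        push_cast; ring
      simp only [hg'def, norm_div, norm_mul, norm_pow, Complex.norm_natCast, Complex.norm_real,
        Real.norm_eq_abs, hn1, habs]
      push_cast [Nat.factorial_succ]
      have hfacne : (n.factorial : ℝ) ≠ 0 := by positivity
      field_simp
    rw [heq]
    have hta : |t| * ‖ω‖ ≤ r := le_of_lt (by
      have hta' : |t| < a := abs_lt.2 ⟨ht.1, ht.2⟩
      calc |t| * ‖ω‖ < a * ‖ω‖ := mul_lt_mul_of_pos_right hta' hnω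
        _ = r := by rw [hadef]; exact div_mul_cancel₀ r (ne_of_gt hnω))
    gcongr
  have hg0 : Summable (fun n => g n 0) := by
    have : (fun n => g n 0) = fun _ => (0:ℂ) := by
      funext n; simp [hgdef]
    rw [this]; exact summable_zero
  have hG : ∀ t ∈ Set.Ioo (-a) a, HasDerivAt (fun y => ∑' n, g n y) (∑' n, g' n t) t := by
    intro t ht
    exact hasDerivAt_tsum_of_isPreconnected hsum2 isOpen_Ioo isPreconnected_Ioo
      (fun n y _ => hgderiv n y) hg'bound h0s hg0 ht
  have hderiv_eq : ∀ t ∈ Set.Ioo (-a) a, (∑' n, g' n t) = ω * uf p ((t:ℂ) * ω) := by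
    intro t ht
    have hz' : ‖(t:ℂ) * ω‖ < r' := (hzbound t ht).trans hrr'
    have hmem : (t:ℂ) * ω ∈ Metric.eball (0:ℂ) ρ := by
      rw [mem_emetric_ball_zero_iff]
      have h11 : ‖(t:ℂ) * ω‖₊ < ρ := by
        rw [← NNReal.coe_lt_coe, coe_nnnorm, hρcoe]; exact hz'
      exact_mod_cast h11
    have husum : HasSum (fun n => pu.coeff n * ((t:ℂ) * ω) ^ n) (uf p ((t:ℂ) * ω)) := by
      have h8 := hpu.hasSum hmem
      rw [zero_add] at h8
      have h9 : (fun n => pu n (fun _ => (t:ℂ) * ω)) = fun n => pu.coeff n * ((t:ℂ) * ω) ^ n := by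
        funext n
        rw [FormalMultilinearSeries.apply_eq_pow_smul_coeff, smul_eq_mul]
        ring
      rwa [h9] at h8
    have h7 : ∀ n : ℕ, g' n t = ω * (pu.coeff n * ((t:ℂ) * ω) ^ n) := by
      intro n
      show (((Q (n + 1)).eval p : ℝ) : ℂ) * (((n:ℂ) + 1) * ((t:ℂ) * ω) ^ n * ω) / (Nat.factorial (n + 1) : ℂ) = _
      rw [hC n]
      have hfacne : ((Nat.factorial (n+1) : ℕ) : ℂ) ≠ 0 := Nat.cast_ne_zero.2 (Nat.factorial_ne_zero _)
      rw [div_eq_iff hfacne, Nat.factorial_succ]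
      push_cast
      ring
    rw [tsum_congr h7, tsum_mul_left, husum.tsum_eq]
  set G : ℝ → ℂ := fun y => ∑' n, g n y with hGdef
  have hφderiv : ∀ t ∈ Set.Ioo (-a) a,
      HasDerivWithinAt (fun t : ℝ => Complex.exp (G t) / hf p ((t:ℂ) * ω)) 0 (Set.Ioo (-a) a) t := by
    intro t ht
    have hznr : ‖(t:ℂ) * ω‖ < R := (hzbound t ht).trans (hrr'.trans hr'R)
    have hzne : hf p ((t:ℂ) * ω) ≠ 0 := hne _ hznr
    have hGd : HasDerivAt G (ω * uf p ((t:ℂ) * ω)) t := by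
      rw [← hderiv_eq t ht]
      exact hG t ht
    have hE : HasDerivAt (fun t => Complex.exp (G t)) (Complex.exp (G t) * (ω * uf p ((t:ℂ) * ω))) t := by
      exact (Complex.hasDerivAt_exp (G t)).comp t hGd
    have hhd : HasDerivAt (fun t : ℝ => hf p ((t:ℂ) * ω)) ((1 - (p:ℂ)) * Complex.exp ((t:ℂ) * ω) * ω) t := by
      exact (hf_hasDerivAt p ((t:ℂ) * ω)).comp (h₂ := hf p) t (hlin t)
    have hdiv := hE.div hhd hzne
    have hzero : (Complex.exp (G t) * (ω * uf p ((t:ℂ) * ω)) * hf p ((t:ℂ) * ω) -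
        Complex.exp (G t) * ((1 - (p:ℂ)) * Complex.exp ((t:ℂ) * ω) * ω)) / (hf p ((t:ℂ) * ω)) ^ 2 = 0 := by
      rw [uf]
      field_simp
      rw [mul_comm ω (t:ℂ), div_self hzne]
      ring
    rw [← hzero]
    exact hdiv.hasDerivWithinAt
  have hconst : ‖(fun t : ℝ => Complex.exp (G t) / hf p ((t:ℂ) * ω)) 1 -
      (fun t : ℝ => Complex.exp (G t) / hf p ((t:ℂ) * ω)) 0‖ ≤ 0 * ‖(1:ℝ) - 0‖ := by
    refine Convex.norm_image_sub_le_of_norm_hasDerivWithin_le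
      (f := fun t : ℝ => Complex.exp (G t) / hf p ((t:ℂ) * ω)) (f' := fun _ : ℝ => (0:ℂ))
      (C := 0) (fun t ht => hφderiv t ht) (fun t _ => by simp) (convex_Ioo (-a) a) h0s h1s
  have hφeq : Complex.exp (G 1) / hf p (((1:ℝ):ℂ) * ω) =
      Complex.exp (G 0) / hf p (((0:ℝ):ℂ) * ω) := by
    have h10 : ‖Complex.exp (G 1) / hf p (((1:ℝ):ℂ) * ω) -
        Complex.exp (G 0) / hf p (((0:ℝ):ℂ) * ω)‖ ≤ 0 := by simpa using hconst
    exact sub_eq_zero.1 (norm_le_zero_iff.1 h10)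
  have hG0 : G 0 = 0 := by
    have h12 : ∀ n : ℕ, g n 0 = 0 := by intro n; simp [hgdef]
    rw [hGdef]
    simp only
    rw [tsum_congr h12, tsum_zero]
  have hf0 : hf p (((0:ℝ):ℂ) * ω) = 1 := by
    rw [show ((0:ℝ):ℂ) * ω = 0 by norm_num]
    show (p:ℂ) + (1 - p) * Complex.exp 0 = 1
    rw [Complex.exp_zero]
    ring
  have hφ0 : Complex.exp (G 0) / hf p (((0:ℝ):ℂ) * ω) = 1 := by
    rw [hG0, Complex.exp_zero, hf0]; simp
  rw [hφ0] at hφeq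
  have hone : ((1:ℝ):ℂ) * ω = ω := by push_cast; ring
  rw [hone] at hφeq
  have hfω : hf p ω ≠ 0 := hne ω hωR
  have hexpG1 : Complex.exp (G 1) = hf p ω := by
    field_simp at hφeq
    exact hφeq
  have hG1 : G 1 = ∑' n : ℕ, (((Q (n + 1)).eval p : ℝ) : ℂ) * ω ^ (n + 1) / (Nat.factorial (n + 1) : ℂ) := by
    rw [hGdef]
    simp only
    apply tsum_congr
    intro n
    rw [hgdef]
    simp only
    norm_num
  rw [← hG1]
  exact hexpG1
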